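/- Let K(λ) = Σ_{i=0}^ℓ K_i λ^i be an m×n matrix polynomial of degree ℓ such that K(λ₀) has full row rank for all λ₀ in the algebraic closure of F and the leading coefficient K_ℓ has full row rank, and let A = [[a,b],[c,d]] ∈ GL(2,F). Then the Möbius transform M_A[K](λ) (taken with grade ℓ) satisfies the same two properties: M_A[K](λ₀) has full row rank for all λ₀ in the algebraic closure of F, and the leading coefficient of M_A[K] (which equals Σ_{i=0}^ℓ K_i a^i c^{ℓ-i}) has full row rank. -/

import Mathlib

section Aux

variable {F E : Type*} [Field F] [Field E] {m n : ℕ}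

/-- Scaling a matrix by a nonzero scalar does not change its rank. -/
lemma aux_rank_smul (x : F) (hx : x ≠ 0) (M : Matrix (Fin m) (Fin n) F) :
    (x • M).rank = M.rank := by
  have h : x • M = (x • (1 : Matrix (Fin m) (Fin m) F)) * M := by
    rw [Matrix.smul_mul, Matrix.one_mul]
  rw [h]
  apply Matrix.rank_mul_eq_right_of_isUnit_det
  rw [Matrix.det_smul, Matrix.det_one, mul_one]
  exact (pow_ne_zero _ hx).isUnit

/-- A matrix of full row rank has a right inverse. -/
lemma aux_exists_right_inverse (M : Matrix (Fin m) (Fin n) F) (h : M.rank = m) :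
    ∃ N : Matrix (Fin n) (Fin m) F, M * N = 1 := by
  have hsurj : Function.Surjective M.mulVecLin := by
    rw [← LinearMap.range_eq_top]
    apply Submodule.eq_top_of_finrank_eq
    rw [← Matrix.rank, h, Module.finrank_pi]
    simp
  choose v hv using fun i : Fin m => hsurj (Pi.single i 1)
  refine ⟨Matrix.of fun j i => v i j, ?_⟩
  ext k i
  have := congrFun (hv i) k
  simp only [Matrix.mulVecLin_apply, Matrix.mulVec, dotProduct] at this
  simp only [Matrix.mul_apply, Matrix.of_apply, Matrix.one_apply]
  rw [this, Pi.single_apply]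

/-- Full row rank is preserved under mapping by a field homomorphism. -/
lemma aux_rank_map_of_rank (f : F →+* E) (M : Matrix (Fin m) (Fin n) F)
    (h : M.rank = m) : (M.map f).rank = m := by
  obtain ⟨N, hN⟩ := aux_exists_right_inverse M h
  have h1 : (M.map f) * (N.map f) = 1 := by
    rw [← Matrix.map_mul, hN, Matrix.map_one f f.map_zero f.map_one]
  have hle : (M.map f).rank ≤ m := by
    simpa using Matrix.rank_le_card_height (M.map f)
  have hge : m ≤ (M.map f).rank := by
    have := Matrix.rank_mul_le_left (M.map f) (N.map f)
    rw [h1] at this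
    simpa [Matrix.rank_one] using this
  omega

/-- Full row rank descends along a field homomorphism. -/
lemma aux_rank_of_rank_map (f : F →+* E) (M : Matrix (Fin m) (Fin n) F)
    (h : (M.map f).rank = m) : M.rank = m := by
  have hindE : LinearIndependent E (M.map f).row := by
    rw [linearIndependent_iff_card_eq_finrank_span]
    rw [Matrix.rank_eq_finrank_span_row] at h
    simp only [Set.finrank]
    exact (Fintype.card_fin m).trans h.symm
  have hindF : LinearIndependent F M.row := by
    rw [Fintype.linearIndependent_iff]
    intro g hg i
    rw [Fintype.linearIndependent_iff] at hindE
    have hg' : ∑ j, f (g j) • (M.map f) j = 0 := by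
      ext k
      have := congrFun hg k
      simp only [Finset.sum_apply, Pi.smul_apply, smul_eq_mul, Pi.zero_apply] at this ⊢
      have := congrArg f this
      simpa [map_sum] using this
    have := hindE (fun j => f (g j)) hg' i
    exact (map_eq_zero_iff f (RingHom.injective f)).mp this
  rw [hindF.rank_matrix]
  simp

/-- Key lemma: if `∑ λ^i • M i` has full row rank for all `λ` and `M ℓ` has full
row rank, then `∑ (u^i v^(ℓ-i)) • M i` has full row rank whenever `(u,v) ≠ (0,0)`. -/
lemma aux_key (ℓ : ℕ) (M : ℕ → Matrix (Fin m) (Fin n) F)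
    (hrank : ∀ lam : F,
      (∑ i ∈ Finset.range (ℓ + 1), lam ^ i • M i).rank = m)
    (hlead : (M ℓ).rank = m)
    (u v : F) (huv : ¬ (u = 0 ∧ v = 0)) :
    (∑ i ∈ Finset.range (ℓ + 1), (u ^ i * v ^ (ℓ - i)) • M i).rank = m := by
  by_cases hv : v = 0
  · have hu : u ≠ 0 := fun hu => huv ⟨hu, hv⟩
    have hsum : (∑ i ∈ Finset.range (ℓ + 1), (u ^ i * v ^ (ℓ - i)) • M i)
        = u ^ ℓ • M ℓ := by
      rw [Finset.sum_eq_single_of_mem ℓ (Finset.self_mem_range_succ ℓ)]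
      · simp
      · intro i hi hne
        have hi' : i < ℓ := lt_of_le_of_ne (Nat.lt_succ_iff.mp (Finset.mem_range.mp hi)) hne
        have : ℓ - i ≠ 0 := by omega
        rw [hv, zero_pow this, mul_zero, zero_smul]
    rw [hsum, aux_rank_smul _ (pow_ne_zero _ hu), hlead]
  · have hsum : (∑ i ∈ Finset.range (ℓ + 1), (u ^ i * v ^ (ℓ - i)) • M i)
        = v ^ ℓ • ∑ i ∈ Finset.range (ℓ + 1), (u * v⁻¹) ^ i • M i := by
      rw [Finset.smul_sum]
      apply Finset.sum_congr rfl
      intro i hi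
      have hi' : i ≤ ℓ := Nat.lt_succ_iff.mp (Finset.mem_range.mp hi)
      rw [smul_smul]
      congr 1
      have h2 : v ^ ℓ * (v ^ i)⁻¹ = v ^ (ℓ - i) := by
        rw [← pow_sub_mul_pow v hi', mul_assoc, mul_inv_cancel₀ (pow_ne_zero _ hv), mul_one]
      rw [mul_pow, inv_pow, ← mul_assoc, mul_comm (v ^ ℓ) (u ^ i), mul_assoc, h2]
    rw [hsum, aux_rank_smul _ (pow_ne_zero _ hv), hrank]

end Aux

/-- If `K(λ) = ∑_{i=0}^ℓ K_i λ^i` is an `m×n` matrix polynomial such that `K(λ₀)` has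
full row rank for all `λ₀` in the algebraic closure of `F` and its leading coefficient
`K_ℓ` has full row rank (i.e., `K` is a minimal basis with all row degrees equal to `ℓ`),
and `A = [[a,b],[c,d]] ∈ GL(2,F)`, then the Möbius transform `M_A[K]` (taken with grade
`ℓ`) satisfies the same two properties; its leading coefficient is `∑_{i=0}^ℓ K_i a^i c^{ℓ-i}`. -/
theorem mobius_constant_row_degrees_minimal_basis {F : Type*} [Field F] {m n : ℕ} (ℓ : ℕ)
    (K : ℕ → Matrix (Fin m) (Fin n) F)
    (hgrade : ∀ i, ℓ < i → K i = 0)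
    (a b c d : F) (hA : a * d - b * c ≠ 0)
    (hrank : ∀ lam : AlgebraicClosure F,
      (∑ i ∈ Finset.range (ℓ + 1),
        lam ^ i • (K i).map (algebraMap F (AlgebraicClosure F))).rank = m)
    (hlead : (K ℓ).rank = m) :
    (∀ lam : AlgebraicClosure F,
      (∑ i ∈ Finset.range (ℓ + 1),
        ((algebraMap F (AlgebraicClosure F) a * lam + algebraMap F (AlgebraicClosure F) b) ^ i *
         (algebraMap F (AlgebraicClosure F) c * lam + algebraMap F (AlgebraicClosure F) d) ^ (ℓ - i)) •
        (K i).map (algebraMap F (AlgebraicClosure F))).rank = m) ∧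
    (∑ i ∈ Finset.range (ℓ + 1), (a ^ i * c ^ (ℓ - i)) • K i).rank = m := by
  set E := AlgebraicClosure F
  set f := algebraMap F E with hf
  have hfi : Function.Injective f := (f : F →+* E).injective
  have hlead' : ((K ℓ).map f).rank = m := aux_rank_map_of_rank f (K ℓ) hlead
  constructor
  · intro lam
    apply aux_key ℓ (fun i => (K i).map f) hrank hlead'
    rintro ⟨hu, hv⟩
    apply hA
    apply hfi
    rw [map_zero, map_sub, map_mul, map_mul]
    linear_combination (f a) * hv - (f c) * hu
  · apply aux_rank_of_rank_map f
    have hmap : (∑ i ∈ Finset.range (ℓ + 1), (a ^ i * c ^ (ℓ - i)) • K i).map f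
        = ∑ i ∈ Finset.range (ℓ + 1), ((f a) ^ i * (f c) ^ (ℓ - i)) • (K i).map f := by
      ext k j
      simp only [Matrix.map_apply, Matrix.sum_apply, Matrix.smul_apply, smul_eq_mul,
        map_sum, map_mul, map_pow]
    rw [hmap]
    apply aux_key ℓ (fun i => (K i).map f) hrank hlead'
    rintro ⟨hu, hv⟩
    have ha : a = 0 := hfi (by simpa using hu)
    have hc : c = 0 := hfi (by simpa using hv)
    apply hA
    rw [ha, hc]
    ring
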